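/- Let a : ℕ → ℝ satisfy a(n) → ∞ as n → ∞. Let α ∈ (0, log 2) and γ ∈ (0, 1 − α/log 2), and suppose there exists N₁ ≥ 2 such that for all n ≥ N₁ one has a(n) > 1 and a(2n) ≥ 2 · a(n) · (1 − α/log a(n)). Then there exist a real A > 0 and an integer N ≥ N₁ such that for every integer k ≥ 0, a(2^k N) ≥ A · 2^k N / (log(2^k N))^{1−γ}. -/

import Mathlib

lemma my_log_lb {y : ℝ} (hy : 0 < y) : 1 - y⁻¹ ≤ Real.log y := by
  have h := Real.log_le_sub_one_of_pos (inv_pos.mpr hy)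
  rw [Real.log_inv] at h
  linarith

lemma core_ineq (α γ l2 β ℓ L : ℝ) (hα : 0 < α) (hγ1 : γ < 1) (hl2 : 0 < l2)
    (hβeq : β = (1 - γ) * l2) (hℓ : 0 < ℓ)
    (hL : α / β * ℓ + (α + α * l2 / β) ≤ L) :
    ℓ ^ (1 - γ) ≤ (1 - α / L) * (ℓ + l2) ^ (1 - γ) := by
  have hβ : 0 < β := by rw [hβeq]; exact mul_pos (by linarith) hl2
  have h1 : 0 < α / β * ℓ := mul_pos (div_pos hα hβ) hℓ
  have h2 : 0 < α * l2 / β := div_pos (mul_pos hα hl2) hβ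
  have hLα : α < L := by linarith
  have hL0 : 0 < L := hα.trans hLα
  have hu1 : α / L < 1 := (div_lt_one hL0).mpr hLα
  have hu0 : 0 < α / L := div_pos hα hL0
  have hkey : α / (L - α) ≤ β / (ℓ + l2) := by
    rw [div_le_div_iff₀ (by linarith) (by linarith)]
    have h3 : α / β * ℓ * β = α * ℓ := by field_simp
    have h4 : α * l2 / β * β = α * l2 := by field_simp
    nlinarith [mul_le_mul_of_nonneg_right hL hβ.le]
  have hlog1 : -(α / (L - α)) ≤ Real.log (1 - α / L) := by
    have h := my_log_lb (show (0:ℝ) < 1 - α / L by linarith)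
    have he0 : 1 - α / L = (L - α) / L := by field_simp
    have he : (1 - α / L)⁻¹ = L / (L - α) := by rw [he0, inv_div]
    rw [he] at h
    have : 1 - L / (L - α) = -(α / (L - α)) := by
      have hne : L - α ≠ 0 := by intro h; apply absurd h; linarith
      field_simp
      ring
    linarith [this ▸ h]
  have hlog2 : l2 / (ℓ + l2) ≤ Real.log (ℓ + l2) - Real.log ℓ := by
    have h := my_log_lb (show (0:ℝ) < (ℓ + l2) / ℓ by positivity)
    have he : ((ℓ + l2) / ℓ)⁻¹ = ℓ / (ℓ + l2) := by rw [inv_div]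
    have he2 : (1 : ℝ) - ℓ / (ℓ + l2) = l2 / (ℓ + l2) := by
      field_simp
      ring
    rw [he, he2, Real.log_div (by linarith) hℓ.ne'] at h
    exact h
  have hcomb : Real.log (ℓ ^ (1 - γ)) ≤ Real.log ((1 - α / L) * (ℓ + l2) ^ (1 - γ)) := by
    rw [Real.log_rpow hℓ, Real.log_mul (by linarith) (Real.rpow_pos_of_pos (by linarith) _).ne',
      Real.log_rpow (by linarith : (0:ℝ) < ℓ + l2)]
    have hb : β / (ℓ + l2) = (1 - γ) * (l2 / (ℓ + l2)) := by
      rw [hβeq]; ring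
    have h5 : (1 - γ) * (l2 / (ℓ + l2)) ≤ (1 - γ) * (Real.log (ℓ + l2) - Real.log ℓ) :=
      mul_le_mul_of_nonneg_left hlog2 (by linarith)
    nlinarith [hlog1, hkey]
  exact (Real.log_le_log_iff (Real.rpow_pos_of_pos hℓ _)
    (mul_pos (by linarith) (Real.rpow_pos_of_pos (by linarith) _))).mp hcomb


lemma cond_aux {L Cl c c' l2 lN D ab q K k : ℝ}
    (hLk : Cl + k * (c' * l2) ≤ L)
    (h5 : ab * (k * l2 + lN) ≤ c * (k * l2 + lN))
    (hK : c * lN + D ≤ K * ((c' - c) * l2))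
    (h6 : K * ((c' - c) * l2) ≤ k * ((c' - c) * l2))
    (hDeq : D = q)
    (hCl1 : 1 ≤ Cl) :
    ab * (k * l2 + lN) + q ≤ L := by linarith

set_option maxHeartbeats 1000000 in
theorem stmt4 (a : ℕ → ℝ) (α γ : ℝ) (N₁ : ℕ)
    (htop : Filter.Tendsto a Filter.atTop Filter.atTop)
    (hα : 0 < α) (hα' : α < Real.log 2)
    (hγ : 0 < γ) (hγ' : γ < 1 - α / Real.log 2)
    (hN₁ : 2 ≤ N₁)
    (hgrow : ∀ n : ℕ, N₁ ≤ n →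
      1 < a n ∧ 2 * a n * (1 - α / Real.log (a n)) ≤ a (2 * n)) :
    ∃ A : ℝ, 0 < A ∧ ∃ N : ℕ, N₁ ≤ N ∧ ∀ k : ℕ,
      A * ((2 ^ k * N : ℕ) : ℝ) / (Real.log ((2 ^ k * N : ℕ) : ℝ)) ^ (1 - γ)
        ≤ a (2 ^ k * N) := by
  have hl2 : 0 < Real.log 2 := Real.log_pos one_lt_two
  have hγ1 : γ < 1 := by
    have : 0 < α / Real.log 2 := div_pos hα hl2
    linarith
  have hβ : 0 < (1 - γ) * Real.log 2 := mul_pos (by linarith) hl2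
  set β := (1 - γ) * Real.log 2 with hβdef
  have hαβ : α < β := by
    have h := (div_lt_iff₀ hl2).mp (show α / Real.log 2 < 1 - γ by linarith)
    rw [hβdef]; linarith
  have hab1 : α / β < 1 := (div_lt_one hβ).mpr hαβ
  have hab0 : 0 < α / β := div_pos hα hβ
  set c := (α / β + 1) / 2 with hcdef
  have hc0 : α / β < c := by rw [hcdef]; linarith
  have hc1 : c < 1 := by rw [hcdef]; linarith
  have hcpos : 0 < c := by rw [hcdef]; linarith
  set c' := (c + 1) / 2 with hc'def
  have hcc : c < c' := by rw [hc'def]; linarith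
  have hc'1 : c' < 1 := by rw [hc'def]; linarith
  have hc'0 : 0 < c' := by rw [hc'def]; linarith
  have h2c : (2:ℝ) ^ (c' - 1) < 1 :=
    Real.rpow_lt_one_of_one_lt_of_neg one_lt_two (by linarith)
  have h2cpos : 0 < (2:ℝ) ^ (c' - 1) := Real.rpow_pos_of_pos two_pos _
  set E := α / (1 - (2:ℝ) ^ (c' - 1)) with hEdef
  have hE : 0 < E := div_pos hα (by linarith)
  set Cl := max E 1 with hCldef
  have hClE : E ≤ Cl := le_max_left _ _
  have hCl1 : (1:ℝ) ≤ Cl := le_max_right _ _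
  set C := Real.exp Cl with hCdef
  have hC0 : 0 < C := Real.exp_pos Cl
  have hlogC : Real.log C = Cl := Real.log_exp Cl
  obtain ⟨N₂, hN₂⟩ := Filter.eventually_atTop.mp (htop.eventually_ge_atTop C)
  set N := max N₁ N₂ with hNdef
  have hNN₁ : N₁ ≤ N := le_max_left _ _
  have hN2 : 2 ≤ N := le_trans hN₁ hNN₁
  have hNR : (2:ℝ) ≤ (N:ℝ) := by exact_mod_cast hN2
  have hNpos : (0:ℝ) < (N:ℝ) := by linarith
  have hlogN : 0 < Real.log N := Real.log_pos (by linarith)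
  have hmN : ∀ k : ℕ, N ≤ 2 ^ k * N := by
    intro k
    calc N = 1 * N := (one_mul N).symm
      _ ≤ 2 ^ k * N := Nat.mul_le_mul_right N (Nat.one_le_two_pow)
  have haC : ∀ k : ℕ, C ≤ a (2 ^ k * N) := fun k =>
    hN₂ _ (le_trans (le_max_right N₁ N₂) (hmN k))
  have hgrows : ∀ k : ℕ, 1 < a (2 ^ k * N) ∧
      2 * a (2 ^ k * N) * (1 - α / Real.log (a (2 ^ k * N))) ≤ a (2 * (2 ^ k * N)) :=
    fun k => hgrow _ (le_trans hNN₁ (hmN k))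
  have haL : ∀ k : ℕ, Cl ≤ Real.log (a (2 ^ k * N)) := by
    intro k
    have := Real.log_le_log hC0 (haC k)
    rwa [hlogC] at this
  -- geometric growth
  set lam := (2:ℝ) ^ (c' : ℝ) with hlamdef
  have hlampos : 0 < lam := Real.rpow_pos_of_pos two_pos _
  have hlam2 : lam = 2 * (2:ℝ) ^ (c' - 1) := by
    have h := Real.rpow_add two_pos (c' - 1) 1
    rw [Real.rpow_one, sub_add_cancel] at h
    rw [hlamdef, h]; ring
  have hstep : ∀ k : ℕ, lam * a (2 ^ k * N) ≤ a (2 ^ (k + 1) * N) := by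
    intro k
    obtain ⟨h1, h2⟩ := hgrows k
    have hLk := haL k
    have hL0 : 0 < Real.log (a (2 ^ k * N)) := lt_of_lt_of_le (by linarith) hLk
    have hαL : α / Real.log (a (2 ^ k * N)) ≤ α / E :=
      div_le_div_of_nonneg_left hα.le hE (le_trans hClE hLk)
    have hαE : α / E = 1 - (2:ℝ) ^ (c' - 1) := by
      rw [hEdef, div_div_eq_mul_div, mul_comm, mul_div_assoc, div_self hα.ne', mul_one]
    have h3 : lam ≤ 2 * (1 - α / Real.log (a (2 ^ k * N))) := by
      rw [hlam2]; linarith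
    have hidx : 2 ^ (k + 1) * N = 2 * (2 ^ k * N) := by ring
    rw [hidx]
    calc lam * a (2 ^ k * N) ≤ (2 * (1 - α / Real.log (a (2 ^ k * N)))) * a (2 ^ k * N) :=
          mul_le_mul_of_nonneg_right h3 (by linarith)
      _ = 2 * a (2 ^ k * N) * (1 - α / Real.log (a (2 ^ k * N))) := by ring
      _ ≤ a (2 * (2 ^ k * N)) := h2
  have hgeom : ∀ k : ℕ, C * lam ^ k ≤ a (2 ^ k * N) := by
    intro k
    induction k with
    | zero => simpa using haC 0
    | succ k ih =>
        calc C * lam ^ (k + 1) = lam * (C * lam ^ k) := by ring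
          _ ≤ lam * a (2 ^ k * N) := mul_le_mul_of_nonneg_left ih hlampos.le
          _ ≤ a (2 ^ (k + 1) * N) := hstep k
  have hLlb : ∀ k : ℕ, Cl + (k : ℝ) * (c' * Real.log 2) ≤ Real.log (a (2 ^ k * N)) := by
    intro k
    have h0 : (0:ℝ) < C * lam ^ k := by positivity
    have h := Real.log_le_log h0 (hgeom k)
    rw [Real.log_mul hC0.ne' (pow_ne_zero _ hlampos.ne'), Real.log_pow, hlogC,
      hlamdef, Real.log_rpow two_pos] at h
    exact_mod_cast h
  -- logs of the dyadic indices
  have hn : ∀ k : ℕ, ((2 ^ k * N : ℕ) : ℝ) = 2 ^ k * (N:ℝ) := by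
    intro k; push_cast; ring
  have hnpos : ∀ k : ℕ, (0:ℝ) < ((2 ^ k * N : ℕ) : ℝ) := by
    intro k; rw [hn k]; positivity
  have hℓeq : ∀ k : ℕ, Real.log ((2 ^ k * N : ℕ) : ℝ) = (k : ℝ) * Real.log 2 + Real.log N := by
    intro k
    rw [hn k, Real.log_mul (by positivity) (by positivity), Real.log_pow]
  have hℓpos : ∀ k : ℕ, 0 < Real.log ((2 ^ k * N : ℕ) : ℝ) := by
    intro k
    rw [hℓeq k]
    have : (0:ℝ) ≤ (k : ℝ) * Real.log 2 := by positivity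
    linarith
  set D := α + α * Real.log 2 / β with hDdef
  have hD : 0 < D := by
    have := div_pos (mul_pos hα hl2) hβ
    rw [hDdef]; linarith
  set K₀ := Nat.ceil ((c * Real.log N + D) / ((c' - c) * Real.log 2)) with hK₀def
  have hK₀ : c * Real.log N + D ≤ (K₀ : ℝ) * ((c' - c) * Real.log 2) := by
    have hpos : 0 < (c' - c) * Real.log 2 := mul_pos (by linarith) hl2
    have h2 := Nat.le_ceil ((c * Real.log N + D) / ((c' - c) * Real.log 2))
    rw [div_le_iff₀ hpos] at h2
    exact h2
  have hcond : ∀ k : ℕ, K₀ ≤ k →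
      α / β * Real.log ((2 ^ k * N : ℕ) : ℝ) + (α + α * Real.log 2 / β)
        ≤ Real.log (a (2 ^ k * N)) := by
    intro k hk
    have hLk := hLlb k
    rw [hℓeq k]
    have hkK : (K₀ : ℝ) ≤ (k : ℝ) := by exact_mod_cast hk
    have hx : 0 < (k : ℝ) * Real.log 2 + Real.log N := by positivity
    have h5 : α / β * ((k : ℝ) * Real.log 2 + Real.log N)
        ≤ c * ((k : ℝ) * Real.log 2 + Real.log N) :=
      mul_le_mul_of_nonneg_right hc0.le hx.le
    have h6 : (K₀ : ℝ) * ((c' - c) * Real.log 2) ≤ (k : ℝ) * ((c' - c) * Real.log 2) :=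
      mul_le_mul_of_nonneg_right hkK (mul_pos (by linarith) hl2).le
    exact cond_aux hLk h5 hK₀ h6 hDdef hCl1
  -- the constant A
  set f : ℕ → ℝ := fun k =>
    a (2 ^ k * N) * (Real.log ((2 ^ k * N : ℕ) : ℝ)) ^ (1 - γ) / ((2 ^ k * N : ℕ) : ℝ)
    with hfdef
  have hfpos : ∀ k, 0 < f k := by
    intro k
    exact div_pos (mul_pos (lt_trans zero_lt_one (hgrows k).1)
      (Real.rpow_pos_of_pos (hℓpos k) _)) (hnpos k)
  have hne : (Finset.range (K₀ + 1)).Nonempty := ⟨0, Finset.mem_range.mpr (Nat.succ_pos _)⟩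
  set A := (Finset.range (K₀ + 1)).inf' hne f with hAdef
  have hA0 : 0 < A := (Finset.lt_inf'_iff hne).mpr fun k _ => hfpos k
  have hbase : ∀ k : ℕ, k ≤ K₀ →
      A * ((2 ^ k * N : ℕ) : ℝ) / (Real.log ((2 ^ k * N : ℕ) : ℝ)) ^ (1 - γ)
        ≤ a (2 ^ k * N) := by
    intro k hk
    have hAf : A ≤ f k := Finset.inf'_le f (Finset.mem_range.mpr (Nat.lt_succ_of_le hk))
    have hp : 0 < (Real.log ((2 ^ k * N : ℕ) : ℝ)) ^ (1 - γ) :=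
      Real.rpow_pos_of_pos (hℓpos k) _
    rw [div_le_iff₀ hp]
    rw [hfdef] at hAf
    simp only at hAf
    rw [le_div_iff₀ (hnpos k)] at hAf
    linarith
  have hmain : ∀ k : ℕ, K₀ ≤ k →
      A * ((2 ^ k * N : ℕ) : ℝ) / (Real.log ((2 ^ k * N : ℕ) : ℝ)) ^ (1 - γ)
        ≤ a (2 ^ k * N) := by
    intro k hk
    induction k, hk using Nat.le_induction with
    | base => exact hbase K₀ le_rfl
    | succ k hk ih =>
        obtain ⟨h1, h2⟩ := hgrows k
        have hcnd := hcond k hk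
        have hcore := core_ineq α γ (Real.log 2) β (Real.log ((2 ^ k * N : ℕ) : ℝ))
          (Real.log (a (2 ^ k * N))) hα hγ1 hl2 hβdef (hℓpos k) hcnd
        have habℓ : 0 < α / β * Real.log ((2 ^ k * N : ℕ) : ℝ) := mul_pos hab0 (hℓpos k)
        have hD2 : 0 < α * Real.log 2 / β := div_pos (mul_pos hα hl2) hβ
        have hLα : α < Real.log (a (2 ^ k * N)) := by linarith
        have hL0 : 0 < Real.log (a (2 ^ k * N)) := hα.trans hLα
        have hu1 : α / Real.log (a (2 ^ k * N)) < 1 := (div_lt_one hL0).mpr hLα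
        have hidx : 2 ^ (k + 1) * N = 2 * (2 ^ k * N) := by ring
        have hnsucc : ((2 * (2 ^ k * N) : ℕ) : ℝ) = 2 * ((2 ^ k * N : ℕ) : ℝ) := by
          push_cast; ring
        have hℓsucc : Real.log ((2 * (2 ^ k * N) : ℕ) : ℝ)
            = Real.log ((2 ^ k * N : ℕ) : ℝ) + Real.log 2 := by
          rw [hnsucc, Real.log_mul two_ne_zero (hnpos k).ne']
          ring
        rw [hidx, hℓsucc, hnsucc]
        have hp1 : 0 < (Real.log ((2 ^ k * N : ℕ) : ℝ)) ^ (1 - γ) :=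
          Real.rpow_pos_of_pos (hℓpos k) _
        have hp2 : 0 < (Real.log ((2 ^ k * N : ℕ) : ℝ) + Real.log 2) ^ (1 - γ) :=
          Real.rpow_pos_of_pos (by linarith [hℓpos k]) _
        have hAn : 0 ≤ A * ((2 ^ k * N : ℕ) : ℝ) := (mul_pos hA0 (hnpos k)).le
        calc A * (2 * ((2 ^ k * N : ℕ) : ℝ))
              / (Real.log ((2 ^ k * N : ℕ) : ℝ) + Real.log 2) ^ (1 - γ)
            ≤ A * ((2 ^ k * N : ℕ) : ℝ) / (Real.log ((2 ^ k * N : ℕ) : ℝ)) ^ (1 - γ)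
              * (2 * (1 - α / Real.log (a (2 ^ k * N)))) := by
              have expand : A * ((2 ^ k * N : ℕ) : ℝ)
                    / (Real.log ((2 ^ k * N : ℕ) : ℝ)) ^ (1 - γ)
                    * (2 * (1 - α / Real.log (a (2 ^ k * N))))
                  = A * ((2 ^ k * N : ℕ) : ℝ)
                    * (2 * (1 - α / Real.log (a (2 ^ k * N))))
                    / (Real.log ((2 ^ k * N : ℕ) : ℝ)) ^ (1 - γ) := by ring
              rw [expand, div_le_div_iff₀ hp2 hp1]
              have hmul := mul_le_mul_of_nonneg_left
                (mul_le_mul_of_nonneg_left hcore hAn) (by norm_num : (0:ℝ) ≤ 2)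
              calc A * (2 * ((2 ^ k * N : ℕ) : ℝ)) * (Real.log ((2 ^ k * N : ℕ) : ℝ)) ^ (1 - γ)
                  = 2 * (A * ((2 ^ k * N : ℕ) : ℝ)
                      * (Real.log ((2 ^ k * N : ℕ) : ℝ)) ^ (1 - γ)) := by ring
                _ ≤ 2 * (A * ((2 ^ k * N : ℕ) : ℝ)
                      * ((1 - α / Real.log (a (2 ^ k * N)))
                        * (Real.log ((2 ^ k * N : ℕ) : ℝ) + Real.log 2) ^ (1 - γ))) := hmul
                _ = A * ((2 ^ k * N : ℕ) : ℝ) * (2 * (1 - α / Real.log (a (2 ^ k * N))))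
                      * (Real.log ((2 ^ k * N : ℕ) : ℝ) + Real.log 2) ^ (1 - γ) := by ring
          _ ≤ a (2 ^ k * N) * (2 * (1 - α / Real.log (a (2 ^ k * N)))) :=
              mul_le_mul_of_nonneg_right ih (by linarith)
          _ = 2 * a (2 ^ k * N) * (1 - α / Real.log (a (2 ^ k * N))) := by ring
          _ ≤ a (2 * (2 ^ k * N)) := h2
  refine ⟨A, hA0, N, hNN₁, fun k => ?_⟩
  rcases le_or_gt k K₀ with h | h
  · exact hbase k h
  · exact hmain k h.le
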